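/- Let T be a contraction on H and let a, b ∈ A_T^⊥s be written according to the orthogonal decomposition A_T^⊥s = A_T ⊕ (K^⊥ × {0}) ⊕ ({0} × K⋆^⊥) as a = (x₀, Tx₀) + (a₊, 0) + (0, a₋) and b = (y₀, Ty₀) + (b₊, 0) + (0, b₋) with x₀, y₀ ∈ K, a₊, b₊ ∈ K^⊥, a₋, b₋ ∈ K⋆^⊥. Then the abstract Green formula holds: [a, b] = i⟨a₊, b₊⟩ − i⟨a₋, b₋⟩, where [·,·] is the standard symplectic form on H × H. -/

import Mathlib

open scoped InnerProductSpace
open ContinuousLinearMap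

/-- abstract Green formula: Let `T` be a contraction on `H`,
`K = ker(Id − T*T)`, `K⋆ = ker(Id − TT*)`, and let `a, b ∈ A_T^⊥s` be
decomposed as `a = (x₀,Tx₀) + (a₊,0) + (0,a₋)`,
`b = (y₀,Ty₀) + (b₊,0) + (0,b₋)` with `x₀, y₀ ∈ K`, `a₊, b₊ ∈ K^⊥`,
`a₋, b₋ ∈ K⋆^⊥`. Then `[a,b] = i⟨a₊,b₊⟩ − i⟨a₋,b₋⟩`, where
`[a,b] = i⟨a₁,b₁⟩ − i⟨a₂,b₂⟩` is the standard symplectic form on `H × H`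
(inner products linear in the first variable). -/
theorem abstract_green_formula
    {H : Type*} [NormedAddCommGroup H] [InnerProductSpace ℂ H] [CompleteSpace H]
    (T : H →L[ℂ] H) (hT : ‖T‖ ≤ 1)
    (K Ks : Submodule ℂ H)
    (hK : K = LinearMap.ker ((1 - adjoint T ∘L T : H →L[ℂ] H) : H →ₗ[ℂ] H))
    (hKs : Ks = LinearMap.ker ((1 - T ∘L adjoint T : H →L[ℂ] H) : H →ₗ[ℂ] H))
    (ATs : Set (H × H))
    (hATs : ATs = {a : H × H | ∀ b ∈ {p : H × H | ∃ x ∈ K, p = (x, T x)},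
      Complex.I * ⟪b.1, a.1⟫_ℂ - Complex.I * ⟪b.2, a.2⟫_ℂ = 0})
    (a b : H × H) (ha : a ∈ ATs) (hb : b ∈ ATs)
    (x₀ y₀ ap bp am bm : H)
    (hx₀ : x₀ ∈ K) (hy₀ : y₀ ∈ K) (hap : ap ∈ Kᗮ) (hbp : bp ∈ Kᗮ)
    (ham : am ∈ Ksᗮ) (hbm : bm ∈ Ksᗮ)
    (hadec : a = (x₀, T x₀) + (ap, 0) + (0, am))
    (hbdec : b = (y₀, T y₀) + (bp, 0) + (0, bm)) :
    Complex.I * ⟪b.1, a.1⟫_ℂ - Complex.I * ⟪b.2, a.2⟫_ℂ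
      = Complex.I * ⟪bp, ap⟫_ℂ - Complex.I * ⟪bm, am⟫_ℂ := by
  subst hK hKs
  -- key identities from membership in kernels
  have hx : adjoint T (T x₀) = x₀ := by
    have h : x₀ - adjoint T (T x₀) = 0 := by
      simpa using LinearMap.mem_ker.mp hx₀
    exact (sub_eq_zero.mp h).symm
  have hy : adjoint T (T y₀) = y₀ := by
    have h : y₀ - adjoint T (T y₀) = 0 := by
      simpa using LinearMap.mem_ker.mp hy₀
    exact (sub_eq_zero.mp h).symm
  have hTx : T x₀ ∈ LinearMap.ker ((1 - T ∘L adjoint T : H →L[ℂ] H) : H →ₗ[ℂ] H) := by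
    simp [LinearMap.mem_ker, sub_eq_zero, hx]
  have hTy : T y₀ ∈ LinearMap.ker ((1 - T ∘L adjoint T : H →L[ℂ] H) : H →ₗ[ℂ] H) := by
    simp [LinearMap.mem_ker, sub_eq_zero, hy]
  -- orthogonality relations
  have h1 : ⟪y₀, ap⟫_ℂ = 0 := hap y₀ hy₀
  have h2 : ⟪bp, x₀⟫_ℂ = 0 := by
    have := hbp x₀ hx₀
    rw [← inner_conj_symm, this, map_zero]
  have h3 : ⟪T y₀, am⟫_ℂ = 0 := ham (T y₀) hTy
  have h4 : ⟪bm, T x₀⟫_ℂ = 0 := by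
    have := hbm (T x₀) hTx
    rw [← inner_conj_symm, this, map_zero]
  have h5 : ⟪T y₀, T x₀⟫_ℂ = ⟪y₀, x₀⟫_ℂ := by
    rw [← ContinuousLinearMap.adjoint_inner_right, hx]
  subst hadec hbdec
  simp only [Prod.fst_add, Prod.snd_add, inner_add_add_self, inner_add_left,
    inner_add_right, add_zero, zero_add, inner_zero_left, inner_zero_right,
    h1, h2, h3, h4, h5]
  ring
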